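/- Let (D,W) be a consistent NMU default theory and let L be a set of literals in W. If S is a minimal strong outlier witness set for L in (D,W) (i.e., S is a strong outlier witness set for L and no proper nonempty subset of S is a strong outlier witness set for L), then the set of letters of the literals in S is contained in a single strongly connected component of the atomic dependency graph of (D,W). -/

import Mathlib

/-! Propositional formulas -/

inductive Form (V : Type) : Type
  | atom : V → Form V
  | tru  : Form V
  | fals : Form V
  | neg  : Form V → Form V
  | conj : Form V → Form V → Form V
  | disj : Form V → Form V → Form V

/-- Satisfaction of a formula by a valuation. -/
def Form.sat {V : Type} (v : V → Prop) : Form V → Prop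
  | .atom a => v a
  | .tru => True
  | .fals => False
  | .neg φ => ¬ Form.sat v φ
  | .conj φ ψ => Form.sat v φ ∧ Form.sat v ψ
  | .disj φ ψ => Form.sat v φ ∨ Form.sat v ψ

/-- Logical logClosure `T*` of a set of formulas. -/
def logClosure {V : Type} (T : Set (Form V)) : Set (Form V) :=
  { φ | ∀ v : V → Prop, (∀ ψ ∈ T, Form.sat v ψ) → Form.sat v φ }

/-- A default rule `α : β₁,…,β_m / γ` (`pre = none` means the prerequisite is missing). -/
structure Default (V : Type) : Type where
  pre   : Option (Form V)
  justs : List (Form V)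
  concl : Form V

/-- The stage sets `E_i` relative to a candidate extension `E`:
`E_0 = W`, `E_{i+1} = E_i* ∪ {γ | α:β₁,…,β_m/γ ∈ D, α ∈ E_i, ¬β₁ ∉ E, …, ¬β_m ∉ E}`. -/
def extStage {V : Type} (D : Set (Default V)) (W : Set (Form V)) (E : Set (Form V)) :
    ℕ → Set (Form V)
  | 0 => W
  | i + 1 =>
      logClosure (extStage D W E i) ∪
        { φ | ∃ d ∈ D, d.concl = φ ∧ (∀ a ∈ d.pre, a ∈ extStage D W E i) ∧
              ∀ b ∈ d.justs, Form.neg b ∉ E }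

/-- `E` is an extension of the default theory `(D, W)`. -/
def IsExtension {V : Type} (D : Set (Default V)) (W : Set (Form V)) (E : Set (Form V)) : Prop :=
  E = ⋃ i, extStage D W E i

/-- `(D, W) ⊨ φ`: every extension of `(D, W)` contains `φ`. -/
def entails {V : Type} (D : Set (Default V)) (W : Set (Form V)) (φ : Form V) : Prop :=
  ∀ E, IsExtension D W E → φ ∈ E

/-! Literals -/

/-- A literal: a letter together with a sign (`pos = true` means a positive literal). -/
structure Lit (V : Type) : Type where
  letter : V
  pos : Bool

/-- The formula corresponding to a literal. -/
def Lit.toForm {V : Type} (l : Lit V) : Form V :=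
  if l.pos then Form.atom l.letter else Form.neg (Form.atom l.letter)

/-- Negation of a literal (so that `¬¬a = a`). -/
def Lit.negate {V : Type} (l : Lit V) : Lit V := ⟨l.letter, !l.pos⟩

/-- A set of literals is consistent if it contains no complementary pair. -/
def LitConsistent {V : Type} (S : Set (Lit V)) : Prop := ∀ l ∈ S, l.negate ∉ S

/-! Normal mixed unary (NMU) default theories -/

/-- An NMU default `α : β / β` with `α` empty or a single literal and `β` a single literal. -/
structure NMUDefault (V : Type) : Type where
  pre : Option (Lit V)
  concl : Lit V

/-- The general default rule corresponding to an NMU default. -/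
def NMUDefault.toDefault {V : Type} (d : NMUDefault V) : Default V :=
  ⟨d.pre.map Lit.toForm, [d.concl.toForm], d.concl.toForm⟩

/-- `E` is an extension of the NMU theory `(D, W)`. -/
def NMU.IsExtension {V : Type} (D : Set (NMUDefault V)) (W : Set (Lit V))
    (E : Set (Form V)) : Prop :=
  _root_.IsExtension (NMUDefault.toDefault '' D) (Lit.toForm '' W) E

/-- The NMU theory `(D, W)` entails the literal `l`. -/
def NMU.entails {V : Type} (D : Set (NMUDefault V)) (W : Set (Lit V)) (l : Lit V) : Prop :=
  _root_.entails (NMUDefault.toDefault '' D) (Lit.toForm '' W) l.toForm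

/-- An NMU theory is normal unary (NU) if every nonempty prerequisite is positive. -/
def IsNU {V : Type} (D : Set (NMUDefault V)) : Prop :=
  ∀ d ∈ D, ∀ p ∈ d.pre, p.pos = true

/-! Atomic dependency graph -/

/-- Edge `(x, y)` of the atomic dependency graph: `x` occurs in the prerequisite and `y`
in the consequent of some default of `D`. -/
def depEdge {V : Type} (D : Set (NMUDefault V)) (x y : V) : Prop :=
  ∃ d ∈ D, (∃ p ∈ d.pre, p.letter = x) ∧ d.concl.letter = y

/-- There is a path from `x` to `y` in the atomic dependency graph. -/
def depReach {V : Type} (D : Set (NMUDefault V)) : V → V → Prop :=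
  Relation.ReflTransGen (depEdge D)

/-- A set of literals `S` influences a literal `l`. -/
def influences {V : Type} (D : Set (NMUDefault V)) (S : Set (Lit V)) (l : Lit V) : Prop :=
  ∃ t ∈ S, depReach D t.letter l.letter

/-- `S` is an outlier witness set for `L` in the NMU theory `(D, W)`. -/
def NMUWitness {V : Type} (D : Set (NMUDefault V)) (W L S : Set (Lit V)) : Prop :=
  S.Nonempty ∧ S ⊆ W \ L ∧
  (∀ l ∈ S, NMU.entails D (W \ S) l.negate) ∧
  ¬ (∀ l ∈ S, NMU.entails D (W \ (S ∪ L)) l.negate)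

/-- `S` is a strong outlier witness set for `L` in the NMU theory `(D, W)`. -/
def NMUStrongWitness {V : Type} (D : Set (NMUDefault V)) (W L S : Set (Lit V)) : Prop :=
  S.Nonempty ∧ S ⊆ W \ L ∧
  (∀ l ∈ S, NMU.entails D (W \ S) l.negate) ∧
  (∀ l ∈ S, ¬ NMU.entails D (W \ (S ∪ L)) l.negate)

namespace OutlierSCC
variable {V : Type}

lemma Lit.negate_negate (l : Lit V) : l.negate.negate = l := by
  cases l with
  | mk x p => cases p <;> rfl

lemma negate_letter (l : Lit V) : l.negate.letter = l.letter := rfl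

lemma subset_logClosure (T : Set (Form V)) : T ⊆ logClosure T :=
  fun φ hφ v hv => hv φ hφ

lemma logClosure_mono {T S : Set (Form V)} (h : T ⊆ S) : logClosure T ⊆ logClosure S :=
  fun φ hφ v hv => hφ v (fun ψ hψ => hv ψ (h hψ))

lemma logClosure_logClosure {T : Set (Form V)} :
    logClosure (logClosure (V := V) T) ⊆ logClosure T :=
  fun φ hφ v hv => hφ v (fun ψ hψ => hψ v hv)

lemma sat_toForm (v : V → Prop) (l : Lit V) :
    Form.sat v l.toForm ↔ (if l.pos then v l.letter else ¬ v l.letter) := by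
  cases l with
  | mk x p => cases p <;> simp [Lit.toForm, Form.sat]

lemma sat_neg_toForm (v : V → Prop) (l : Lit V) :
    Form.sat v (Form.neg l.toForm) ↔ Form.sat v l.negate.toForm := by
  cases l with
  | mk x p =>
    cases p <;> simp [Lit.toForm, Lit.negate, Form.sat]

lemma neg_mem_logClosure_iff (S : Set (Form V)) (l : Lit V) :
    Form.neg l.toForm ∈ logClosure S ↔ l.negate.toForm ∈ logClosure S := by
  constructor <;> intro h v hv
  · exact (sat_neg_toForm v l).1 (h v hv)
  · exact (sat_neg_toForm v l).2 (h v hv)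

lemma sat_toForm_pos (v : V → Prop) (x : V) :
    Form.sat v (Lit.toForm ⟨x, true⟩) ↔ v x := by
  simp [Lit.toForm, Form.sat]

lemma sat_toForm_neg (v : V → Prop) (x : V) :
    Form.sat v (Lit.toForm ⟨x, false⟩) ↔ ¬ v x := by
  simp [Lit.toForm, Form.sat]

lemma lit_mem_logClosure_iff {T : Set (Lit V)} (hT : LitConsistent T) (l : Lit V) :
    l.toForm ∈ logClosure (Lit.toForm '' T) ↔ l ∈ T := by
  constructor
  · intro h
    by_contra hl
    set v : V → Prop := fun y => (⟨y, true⟩ : Lit V) ∈ T ∨ (l.pos = false ∧ y = l.letter) with hv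
    have hsat : ∀ ψ ∈ Lit.toForm '' T, Form.sat v ψ := by
      rintro ψ ⟨m, hm, rfl⟩
      rcases m with ⟨x, p⟩
      cases p
      · rw [sat_toForm_neg]
        rintro (hx | ⟨hp, hx⟩)
        · exact hT _ hm hx
        · subst hx
          have hle : l = ⟨l.letter, false⟩ := by
            cases l with
            | mk y q => cases q <;> simp_all
          rw [hle] at hl; exact hl hm
      · rw [sat_toForm_pos]
        exact Or.inl hm
    have hs := h v hsat
    rcases l with ⟨x, p⟩
    cases p
    · rw [sat_toForm_neg] at hs
      exact hs (Or.inr ⟨rfl, rfl⟩)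
    · rw [sat_toForm_pos] at hs
      rcases hs with hx | ⟨hp, _⟩
      · exact hl hx
      · exact absurd hp (by simp)
  · intro h
    exact subset_logClosure _ ⟨l, h, rfl⟩


/-! Literal-level cores of NMU extensions -/

def litStage (D : Set (NMUDefault V)) (W T : Set (Lit V)) : ℕ → Set (Lit V)
  | 0 => W
  | i + 1 => litStage D W T i ∪
      { c | ∃ d ∈ D, d.concl = c ∧ (∀ p ∈ d.pre, p ∈ litStage D W T i) ∧ c.negate ∉ T }

def IsCore (D : Set (NMUDefault V)) (W T : Set (Lit V)) : Prop :=
  T = ⋃ i, litStage D W T i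

variable {D : Set (NMUDefault V)} {W T : Set (Lit V)}

lemma litStage_succ_subset (i : ℕ) : litStage D W T i ⊆ litStage D W T (i + 1) :=
  Set.subset_union_left

lemma litStage_mono {i j : ℕ} (h : i ≤ j) : litStage D W T i ⊆ litStage D W T j := by
  induction j with
  | zero => rw [Nat.le_zero.mp h]
  | succ j ih =>
    rcases Nat.lt_or_ge i (j+1) with hlt | hge
    · exact (ih (Nat.lt_succ_iff.mp hlt)).trans (litStage_succ_subset j)
    · rw [Nat.le_antisymm h hge]

lemma litStage_subset_core (hT : IsCore D W T) (i : ℕ) : litStage D W T i ⊆ T := by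
  intro m hm
  rw [hT]
  exact Set.mem_iUnion.mpr ⟨i, hm⟩

lemma W_subset_core (hT : IsCore D W T) : W ⊆ T := litStage_subset_core hT 0

lemma mem_litStage_origin {m : Lit V} {i : ℕ} (h : m ∈ litStage D W T i) :
    m ∈ W ∨ (∃ d ∈ D, d.concl = m ∧ m.negate ∉ T) := by
  induction i with
  | zero => exact Or.inl h
  | succ i ih =>
    rcases h with h | ⟨d, hd, hc, _, hneg⟩
    · exact ih h
    · exact Or.inr ⟨d, hd, hc, hneg⟩

lemma mem_core_origin (hT : IsCore D W T) {m : Lit V} (h : m ∈ T) :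
    m ∈ W ∨ (∃ d ∈ D, d.concl = m ∧ m.negate ∉ T) := by
  rw [hT] at h
  rcases Set.mem_iUnion.mp h with ⟨i, hi⟩
  exact mem_litStage_origin hi

lemma core_consistent (hW : LitConsistent W) (hT : IsCore D W T) : LitConsistent T := by
  intro m hm hneg
  rcases mem_core_origin hT hm with hmW | ⟨d, hd, hc, hn⟩
  · rcases mem_core_origin hT hneg with hnW | ⟨d', hd', hc', hn'⟩
    · exact hW m hmW hnW
    · rw [Lit.negate_negate] at hn'; exact hn' hm
  · exact hn hneg

lemma core_subset_union (hT : IsCore D W T) :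
    T ⊆ W ∪ (fun d => d.concl) '' D := by
  rw [hT]
  refine Set.iUnion_subset fun i => ?_
  induction i with
  | zero => exact Set.subset_union_left
  | succ i ih =>
    rintro m (hm | ⟨d, hd, hc, -, -⟩)
    · exact ih hm
    · exact Or.inr ⟨d, hd, hc⟩

lemma core_finite (hD : D.Finite) (hWf : W.Finite) (hT : IsCore D W T) : T.Finite :=
  (hWf.union (hD.image _)).subset (core_subset_union hT)

lemma core_closed (hT : IsCore D W T) {d : NMUDefault V} (hd : d ∈ D)
    (hpre : ∀ p ∈ d.pre, p ∈ T) (hneg : d.concl.negate ∉ T) : d.concl ∈ T := by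
  have : ∃ i, ∀ p ∈ d.pre, p ∈ litStage D W T i := by
    cases hp : d.pre with
    | none => exact ⟨0, by simp [hp]⟩
    | some p =>
      have hpT : p ∈ T := hpre p (by rw [hp]; rfl)
      rw [hT] at hpT
      rcases Set.mem_iUnion.mp hpT with ⟨i, hi⟩
      exact ⟨i, by simp [hp]; exact hi⟩
  rcases this with ⟨i, hi⟩
  have : d.concl ∈ litStage D W T (i+1) := Or.inr ⟨d, hd, rfl, hi, hneg⟩
  exact litStage_subset_core hT (i+1) this

/-- Stabilization of a monotone sequence with finite union. -/
lemma exists_stage_stab {α : Type*} (f : ℕ → Set α) (hmono : ∀ i j, i ≤ j → f i ⊆ f j)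
    (hfin : (⋃ i, f i).Finite) : ∃ N, (⋃ i, f i) = f N := by
  have h : ∀ x : hfin.toFinset, ∃ i, x.1 ∈ f i := by
    intro x
    have := x.2
    rw [hfin.mem_toFinset] at this
    exact Set.mem_iUnion.mp this
  choose g hg using h
  refine ⟨hfin.toFinset.attach.sup g, ?_⟩
  apply Set.Subset.antisymm
  · intro x hx
    have hx' : x ∈ hfin.toFinset := hfin.mem_toFinset.mpr hx
    refine hmono _ _ (Finset.le_sup (Finset.mem_attach _ ⟨x, hx'⟩)) (hg ⟨x, hx'⟩)
  · exact Set.subset_iUnion f _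

lemma core_stab (hD : D.Finite) (hWf : W.Finite) (hT : IsCore D W T) :
    ∃ N, T = litStage D W T N := by
  have hfin : (⋃ i, litStage D W T i).Finite := by
    rw [← hT]; exact core_finite hD hWf hT
  rcases exists_stage_stab _ (fun i j h => litStage_mono h) hfin with ⟨N, hN⟩
  exact ⟨N, hT.trans hN⟩
/-! Bridge between extensions and cores -/

lemma litConsistent_mono {A B : Set (Lit V)} (h : LitConsistent B) (hAB : A ⊆ B) :
    LitConsistent A := fun l hl hn => h l (hAB hl) (hAB hn)

lemma extStage_succ_subset {D' : Set (Default V)} {W' E : Set (Form V)} (i : ℕ) :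
    extStage D' W' E i ⊆ extStage D' W' E (i + 1) :=
  (subset_logClosure _).trans Set.subset_union_left

lemma litStage_subset_union {B : Set (Lit V)} (i : ℕ) :
    litStage D W B i ⊆ W ∪ (fun d => d.concl) '' D := by
  induction i with
  | zero => exact Set.subset_union_left
  | succ i ih =>
    rintro m (hm | ⟨d, hd, hc, -, -⟩)
    · exact ih hm
    · exact Or.inr ⟨d, hd, hc⟩

lemma toForm_litStage_subset {B : Set (Lit V)} {E : Set (Form V)}
    (hblock : ∀ c : Lit V, Form.neg c.toForm ∈ E ↔ c.negate ∈ B) (i : ℕ) :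
    Lit.toForm '' litStage D W B i ⊆
      extStage (NMUDefault.toDefault '' D) (Lit.toForm '' W) E i := by
  induction i with
  | zero => exact subset_of_eq rfl
  | succ i ih =>
    rintro φ ⟨m, hm | ⟨d, hd, hconcl, hpre, hneg⟩, rfl⟩
    · exact (subset_logClosure _).trans Set.subset_union_left (ih ⟨m, hm, rfl⟩)
    · refine Set.subset_union_right ⟨d.toDefault, ⟨d, hd, rfl⟩, ?_, ?_, ?_⟩
      · show d.concl.toForm = m.toForm
        rw [hconcl]
      · show ∀ a ∈ d.pre.map Lit.toForm, a ∈ extStage _ _ E i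
        cases hp : d.pre with
        | none => simp [hp]
        | some p =>
          intro a ha
          simp only [hp, Option.map_some, Option.mem_def, Option.some_inj] at ha
          subst ha
          exact ih ⟨p, hpre p (by rw [hp]; rfl), rfl⟩
      · show ∀ b ∈ [d.concl.toForm], Form.neg b ∉ E
        intro b hb
        rw [List.mem_singleton] at hb
        subst hb
        rw [hblock]
        rw [hconcl]
        exact hneg

lemma extStage_subset_logClosure {B : Set (Lit V)} {E : Set (Form V)}
    (hblock : ∀ c : Lit V, Form.neg c.toForm ∈ E ↔ c.negate ∈ B)
    (hc : ∀ i, LitConsistent (litStage D W B i)) (i : ℕ) :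
    extStage (NMUDefault.toDefault '' D) (Lit.toForm '' W) E i ⊆
      logClosure (Lit.toForm '' litStage D W B i) := by
  induction i with
  | zero => exact subset_logClosure _
  | succ i ih =>
    rintro φ (hφ | ⟨d', ⟨d, hd, rfl⟩, hconcl, hpre, hjust⟩)
    · exact logClosure_mono (Set.image_mono (litStage_succ_subset i))
        (logClosure_logClosure (logClosure_mono ih hφ))
    · have hpre' : ∀ p ∈ d.pre, p ∈ litStage D W B i := by
        intro p hp
        have ha : p.toForm ∈ extStage (NMUDefault.toDefault '' D) (Lit.toForm '' W) E i := by
          apply hpre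
          show p.toForm ∈ d.pre.map Lit.toForm
          rw [hp]; rfl
        exact (lit_mem_logClosure_iff (hc i) p).mp (ih ha)
      have hneg : d.concl.negate ∉ B := by
        have := hjust d.concl.toForm (List.mem_singleton.mpr rfl)
        rw [hblock] at this
        exact this
      have : d.concl ∈ litStage D W B (i + 1) := Or.inr ⟨d, hd, rfl, hpre', hneg⟩
      exact subset_logClosure _ ⟨d.concl, this, hconcl⟩
lemma hblock_of_closure (hTc : LitConsistent T) :
    ∀ c : Lit V, Form.neg c.toForm ∈ logClosure (Lit.toForm '' T) ↔ c.negate ∈ T := by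
  intro c
  rw [neg_mem_logClosure_iff, lit_mem_logClosure_iff hTc]

/-- Direction A: the closure of a core is an extension. -/
lemma isExtension_of_core (hD : D.Finite) (hWf : W.Finite) (hW : LitConsistent W)
    (hT : IsCore D W T) :
    NMU.IsExtension D W (logClosure (Lit.toForm '' T)) := by
  have hTc : LitConsistent T := core_consistent hW hT
  set E := logClosure (Lit.toForm '' T) with hEdef
  have hblock : ∀ c : Lit V, Form.neg c.toForm ∈ E ↔ c.negate ∈ T := hblock_of_closure hTc
  have hc : ∀ i, LitConsistent (litStage D W T i) :=
    fun i => litConsistent_mono hTc (litStage_subset_core hT i)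
  obtain ⟨N, hN⟩ := core_stab hD hWf hT
  show E = ⋃ i, extStage (NMUDefault.toDefault '' D) (Lit.toForm '' W) E i
  apply Set.Subset.antisymm
  · -- E ⊆ ⋃ extStage
    intro φ hφ
    have h1 : E ⊆ extStage (NMUDefault.toDefault '' D) (Lit.toForm '' W) E (N + 1) := by
      intro ψ hψ
      have : ψ ∈ logClosure (Lit.toForm '' litStage D W T N) := by
        rw [← hN]; exact hψ
      exact Set.subset_union_left
        (logClosure_mono (toForm_litStage_subset hblock N) this)
    exact Set.mem_iUnion.mpr ⟨N + 1, h1 hφ⟩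
  · -- ⋃ extStage ⊆ E
    refine Set.iUnion_subset fun i => ?_
    intro φ hφ
    have := extStage_subset_logClosure hblock hc i hφ
    exact logClosure_mono (Set.image_mono (litStage_subset_core hT i)) this

/-- Direction B: every extension is the closure of a core. -/
lemma core_of_extension (hD : D.Finite) (hWf : W.Finite) (hW : LitConsistent W)
    {E : Set (Form V)} (hE : NMU.IsExtension D W E) :
    ∃ T, IsCore D W T ∧ E = logClosure (Lit.toForm '' T) := by
  set B : Set (Lit V) := { c | Form.neg c.negate.toForm ∈ E } with hBdef
  have hblock : ∀ c : Lit V, Form.neg c.toForm ∈ E ↔ c.negate ∈ B := by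
    intro c
    show _ ↔ Form.neg c.negate.negate.toForm ∈ E
    rw [Lit.negate_negate]
  set T : Set (Lit V) := ⋃ i, litStage D W B i with hTdef
  have hstage_sub : ∀ i, litStage D W B i ⊆ T := fun i => Set.subset_iUnion _ i
  have hEeq : E = ⋃ i, extStage (NMUDefault.toDefault '' D) (Lit.toForm '' W) E i := hE
  -- images of stages sit inside E
  have himg : ∀ i, Lit.toForm '' litStage D W B i ⊆ E := by
    intro i
    refine (toForm_litStage_subset hblock i).trans ?_
    exact (Set.subset_iUnion _ i).trans hEeq.symm.subset
  -- E is closed under the negate/neg equivalence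
  have hcl : ∀ m : Lit V, m.negate.toForm ∈ E → Form.neg m.toForm ∈ E := by
    intro m hm
    have hm' := hEeq.subset hm
    rcases Set.mem_iUnion.mp hm' with ⟨j, hj⟩
    refine hEeq.symm.subset (Set.mem_iUnion.mpr ⟨j + 1, Set.subset_union_left ?_⟩)
    intro v hv
    exact (sat_neg_toForm v m).mpr (hv _ hj)
  -- T is consistent
  have hTc : LitConsistent T := by
    intro m hm hmn
    rcases Set.mem_iUnion.mp hm with ⟨i, hi⟩
    rcases Set.mem_iUnion.mp hmn with ⟨j, hj⟩
    have hmE : m.toForm ∈ E := himg i ⟨m, hi, rfl⟩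
    have hmnE : m.negate.toForm ∈ E := himg j ⟨m.negate, hj, rfl⟩
    rcases mem_litStage_origin hi with hmW | ⟨d, hd, hc, hn⟩
    · rcases mem_litStage_origin hj with hnW | ⟨d', hd', hc', hn'⟩
      · exact hW m hmW hnW
      · -- m.negate was added by a default, blocked by (m.negate).negate ∉ B
        apply hn'
        rw [← hblock]
        exact hcl m.negate (by rw [Lit.negate_negate]; exact hmE)
    · exact hn (by rw [← hblock]; exact hcl m hmnE)
  have hc : ∀ i, LitConsistent (litStage D W B i) := fun i => litConsistent_mono hTc (hstage_sub i)
  -- T is finite, hence the stages stabilize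
  have hTfin : T.Finite := by
    have h1 : T ⊆ W ∪ (fun d => d.concl) '' D := Set.iUnion_subset fun i => litStage_subset_union i
    exact (hWf.union (hD.image (fun d => d.concl))).subset h1
  obtain ⟨N, hN⟩ := exists_stage_stab (litStage D W B) (fun i j h => litStage_mono h)
    (by rw [← hTdef]; exact hTfin)
  rw [← hTdef] at hN
  -- E equals the closure of T
  have hEcl : E = logClosure (Lit.toForm '' T) := by
    apply Set.Subset.antisymm
    · refine hEeq.subset.trans ?_
      refine Set.iUnion_subset fun i => ?_
      refine (extStage_subset_logClosure hblock hc i).trans ?_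
      exact logClosure_mono (Set.image_mono (hstage_sub i))
    · intro φ hφ
      refine hEeq.symm.subset (Set.mem_iUnion.mpr ⟨N + 1, Set.subset_union_left ?_⟩)
      have : φ ∈ logClosure (Lit.toForm '' litStage D W B N) := by
        rw [← hN]; exact hφ
      exact logClosure_mono (toForm_litStage_subset hblock N) this
  -- B equals T
  have hBT : B = T := by
    ext c
    show Form.neg c.negate.toForm ∈ E ↔ c ∈ T
    rw [hEcl, neg_mem_logClosure_iff, Lit.negate_negate, lit_mem_logClosure_iff hTc]
  refine ⟨T, ?_, hEcl⟩
  show T = ⋃ i, litStage D W T i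
  conv_rhs => rw [← hBT]

/-- Entailment of a literal is membership in every core. -/
lemma entails_iff_core (hD : D.Finite) (hWf : W.Finite) (hW : LitConsistent W) (l : Lit V) :
    NMU.entails D W l ↔ ∀ T, IsCore D W T → l ∈ T := by
  constructor
  · intro h T hT
    have hext := isExtension_of_core hD hWf hW hT
    have := h _ hext
    exact (lit_mem_logClosure_iff (core_consistent hW hT) l).mp this
  · intro h E hE
    obtain ⟨T, hT, rfl⟩ := core_of_extension hD hWf hW hE
    exact subset_logClosure _ ⟨l, h T hT, rfl⟩
/-! Restriction and completion of cores relative to a downward-closed letter set -/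

lemma litStage_restrict {R : Set V} (hR : ∀ x y, depEdge D x y → y ∈ R → x ∈ R)
    (T : Set (Lit V)) (i : ℕ) :
    litStage {d ∈ D | d.concl.letter ∈ R} (W ∩ {m | m.letter ∈ R})
        (T ∩ {m | m.letter ∈ R}) i
      = litStage D W T i ∩ {m | m.letter ∈ R} := by
  induction i with
  | zero => rfl
  | succ i ih =>
    ext c
    constructor
    · rintro (hc | ⟨d, ⟨hd, hdR⟩, hconcl, hpre, hneg⟩)
      · rw [ih] at hc
        exact ⟨Or.inl hc.1, hc.2⟩
      · refine ⟨Or.inr ⟨d, hd, hconcl, ?_, ?_⟩, by rw [← hconcl]; exact hdR⟩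
        · intro p hp
          have := hpre p hp
          rw [ih] at this
          exact this.1
        · intro h
          exact hneg ⟨h, by show c.negate.letter ∈ R; rw [negate_letter, ← hconcl]; exact hdR⟩
    · rintro ⟨hc | ⟨d, hd, hconcl, hpre, hneg⟩, hcR⟩
      · exact Or.inl (by rw [ih]; exact ⟨hc, hcR⟩)
      · have hdR : d.concl.letter ∈ R := by rw [hconcl]; exact hcR
        refine Or.inr ⟨d, ⟨hd, hdR⟩, hconcl, ?_, ?_⟩
        · intro p hp
          rw [ih]
          refine ⟨hpre p hp, ?_⟩
          exact hR p.letter d.concl.letter ⟨d, hd, ⟨p, hp, rfl⟩, rfl⟩ hdR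
        · intro h
          exact hneg h.1

lemma core_restrict {R : Set V} (hR : ∀ x y, depEdge D x y → y ∈ R → x ∈ R)
    (hT : IsCore D W T) :
    IsCore {d ∈ D | d.concl.letter ∈ R} (W ∩ {m | m.letter ∈ R})
      (T ∩ {m | m.letter ∈ R}) := by
  show _ = ⋃ i, _
  conv_lhs => rw [hT]
  rw [Set.iUnion_inter]
  exact Set.iUnion_congr fun i => (litStage_restrict hR T i).symm

/-! The greedy completion construction -/

open Classical in
noncomputable def gstep (D0 : Set (NMUDefault V)) (S : Set (Lit V)) : Set (Lit V) :=
  if h : ∃ d, d ∈ D0 ∧ (∀ p ∈ d.pre, p ∈ S) ∧ d.concl.negate ∉ S ∧ d.concl ∉ S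
  then insert h.choose.concl S
  else S

noncomputable def gseq (D0 : Set (NMUDefault V)) (S0 : Set (Lit V)) : ℕ → Set (Lit V)
  | 0 => S0
  | n + 1 => gstep D0 (gseq D0 S0 n)

lemma subset_gstep (D0 : Set (NMUDefault V)) (S : Set (Lit V)) : S ⊆ gstep D0 S := by
  unfold gstep
  split
  · exact Set.subset_insert _ _
  · exact subset_of_eq rfl

lemma gseq_mono (D0 : Set (NMUDefault V)) (S0 : Set (Lit V)) {i j : ℕ} (h : i ≤ j) :
    gseq D0 S0 i ⊆ gseq D0 S0 j := by
  induction j with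
  | zero => rw [Nat.le_zero.mp h]
  | succ j ih =>
    rcases Nat.lt_or_ge i (j+1) with hlt | hge
    · exact (ih (Nat.lt_succ_iff.mp hlt)).trans (subset_gstep _ _)
    · rw [Nat.le_antisymm h hge]

lemma gseq_subset (D0 : Set (NMUDefault V)) (S0 : Set (Lit V)) (n : ℕ) :
    gseq D0 S0 n ⊆ S0 ∪ (fun d => d.concl) '' D0 := by
  induction n with
  | zero => exact Set.subset_union_left
  | succ n ih =>
    show gstep D0 (gseq D0 S0 n) ⊆ _
    unfold gstep
    split
    · next h =>
      intro x hx
      rcases Set.mem_insert_iff.mp hx with rfl | hx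
      · exact Or.inr ⟨h.choose, h.choose_spec.1, rfl⟩
      · exact ih hx
    · exact ih

lemma negate_ne (l : Lit V) : l.negate ≠ l := by
  intro h
  have := congrArg Lit.pos h
  simp [Lit.negate] at this

lemma gstep_consistent {D0 : Set (NMUDefault V)} {S : Set (Lit V)}
    (hS : LitConsistent S) : LitConsistent (gstep D0 S) := by
  unfold gstep
  split
  · next h =>
    obtain ⟨hd, hpre, hneg, hnew⟩ := h.choose_spec
    intro m hm hmn
    rcases Set.mem_insert_iff.mp hm with rfl | hm
    · rcases Set.mem_insert_iff.mp hmn with habs | hmn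
      · exact negate_ne _ habs
      · exact hneg hmn
    · rcases Set.mem_insert_iff.mp hmn with habs | hmn
      · apply hneg
        rw [← habs, Lit.negate_negate]
        exact hm
      · exact hS m hm hmn
  · exact hS

lemma gseq_consistent {D0 : Set (NMUDefault V)} {S0 : Set (Lit V)}
    (hS0 : LitConsistent S0) (n : ℕ) : LitConsistent (gseq D0 S0 n) := by
  induction n with
  | zero => exact hS0
  | succ n ih => exact gstep_consistent ih

lemma gseq_inter {D0 : Set (NMUDefault V)} {S0 : Set (Lit V)} {R : Set V}
    (hD0 : ∀ d ∈ D0, d.concl.letter ∉ R) (n : ℕ) :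
    gseq D0 S0 n ∩ {m : Lit V | m.letter ∈ R} = S0 ∩ {m | m.letter ∈ R} := by
  induction n with
  | zero => rfl
  | succ n ih =>
    rw [← ih]
    show gstep D0 (gseq D0 S0 n) ∩ _ = _
    unfold gstep
    split
    · next h =>
      obtain ⟨hd, -, -, -⟩ := h.choose_spec
      exact Set.insert_inter_of_notMem (show h.choose.concl ∉ {m : Lit V | m.letter ∈ R} from hD0 _ hd)
    · rfl

lemma gseq_stab {D0 : Set (NMUDefault V)} {S0 : Set (Lit V)}
    (hfin : (S0 ∪ (fun d => d.concl) '' D0).Finite) :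
    ∃ N, gstep D0 (gseq D0 S0 N) = gseq D0 S0 N := by
  by_contra hcon
  push_neg at hcon
  have hssub : ∀ n, gseq D0 S0 n ⊂ gseq D0 S0 (n + 1) := fun n =>
    (Set.ssubset_iff_of_subset (subset_gstep _ _)).mpr
      (by
        rcases Set.exists_of_ssubset ((subset_gstep D0 (gseq D0 S0 n)).ssubset_of_ne
          (Ne.symm (hcon n))) with ⟨x, hx1, hx2⟩
        exact ⟨x, hx1, hx2⟩)
  have hcard : ∀ n, n ≤ (gseq D0 S0 n).ncard := by
    intro n
    induction n with
    | zero => exact Nat.zero_le _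
    | succ n ih =>
      have hlt : (gseq D0 S0 n).ncard < (gseq D0 S0 (n+1)).ncard :=
        Set.ncard_lt_ncard (hssub n) (hfin.subset (gseq_subset D0 S0 (n+1)))
      omega
  have hle : ∀ n, (gseq D0 S0 n).ncard ≤ (S0 ∪ (fun d => d.concl) '' D0).ncard :=
    fun n => Set.ncard_le_ncard (gseq_subset D0 S0 n) hfin
  have := hcard ((S0 ∪ (fun d => d.concl) '' D0).ncard + 1)
  have := hle ((S0 ∪ (fun d => d.concl) '' D0).ncard + 1)
  omega

lemma gstep_fixed_closed {D0 : Set (NMUDefault V)} {S : Set (Lit V)}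
    (hfix : gstep D0 S = S) :
    ∀ d ∈ D0, (∀ p ∈ d.pre, p ∈ S) → d.concl.negate ∉ S → d.concl ∈ S := by
  intro d hd hpre hneg
  by_contra hnot
  have h : ∃ d, d ∈ D0 ∧ (∀ p ∈ d.pre, p ∈ S) ∧ d.concl.negate ∉ S ∧ d.concl ∉ S :=
    ⟨d, hd, hpre, hneg, hnot⟩
  rw [gstep, dif_pos h] at hfix
  have hspec := h.choose_spec
  apply hspec.2.2.2
  have hmem := Set.mem_insert h.choose.concl S
  rwa [hfix] at hmem

lemma gseq_le_stab {D0 : Set (NMUDefault V)} {S0 : Set (Lit V)} {N : ℕ}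
    (hN : gstep D0 (gseq D0 S0 N) = gseq D0 S0 N) (n : ℕ) :
    gseq D0 S0 n ⊆ gseq D0 S0 N := by
  have hfix : ∀ k, gseq D0 S0 (N + k) = gseq D0 S0 N := by
    intro k
    induction k with
    | zero => rfl
    | succ k ih =>
      show gstep _ (gseq _ _ (N + k)) = _
      rw [ih, hN]
  rcases le_total n N with h | h
  · exact gseq_mono _ _ h
  · obtain ⟨k, rfl⟩ := Nat.exists_eq_add_of_le h
    exact (hfix k).subset
/-- Completion: any core of the restricted theory extends to a core of the full theory. -/
lemma core_complete (hD : D.Finite) (hWf : W.Finite) (hW : LitConsistent W)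
    {R : Set V} (hR : ∀ x y, depEdge D x y → y ∈ R → x ∈ R)
    {U : Set (Lit V)}
    (hU : IsCore {d ∈ D | d.concl.letter ∈ R} (W ∩ {m | m.letter ∈ R}) U) :
    ∃ T, IsCore D W T ∧ T ∩ {m : Lit V | m.letter ∈ R} = U := by
  set Rl : Set (Lit V) := {m | m.letter ∈ R} with hRl
  set DR : Set (NMUDefault V) := {d ∈ D | d.concl.letter ∈ R} with hDR
  set D0 : Set (NMUDefault V) := {d ∈ D | d.concl.letter ∉ R} with hD0
  have hURl : U ⊆ Rl := by
    intro m hm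
    rcases (core_subset_union hU) hm with ⟨h1, h2⟩ | ⟨d, hd, hc⟩
    · exact h2
    · rw [← hc]; exact hd.2
  have hWRU : W ∩ Rl ⊆ U := W_subset_core hU
  have hUcons : LitConsistent U :=
    core_consistent (litConsistent_mono hW Set.inter_subset_left) hU
  set S0 : Set (Lit V) := U ∪ W with hS0
  have hS0cons : LitConsistent S0 := by
    rintro m (hmU | hmW) hmn
    · rcases hmn with hnU | hnW
      · exact hUcons m hmU hnU
      · have : m.negate ∈ Rl := by
          show m.negate.letter ∈ R; rw [negate_letter]; exact hURl hmU
        exact hUcons m hmU (hWRU ⟨hnW, this⟩)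
    · rcases hmn with hnU | hnW
      · have : m ∈ Rl := by
          show m.letter ∈ R; rw [← negate_letter m]; exact hURl hnU
        exact hUcons m (hWRU ⟨hmW, this⟩) hnU
      · exact hW m hmW hnW
  have hS0Rl : S0 ∩ Rl = U := by
    apply Set.Subset.antisymm
    · rintro m ⟨hmU | hmW, hmR⟩
      · exact hmU
      · exact hWRU ⟨hmW, hmR⟩
    · intro m hm
      exact ⟨Or.inl hm, hURl hm⟩
  have hUfin : U.Finite :=
    core_finite (hD.subset (Set.sep_subset _ _)) (hWf.subset Set.inter_subset_left) hU
  have hgfin : (S0 ∪ (fun d => d.concl) '' D0).Finite :=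
    ((hUfin.union hWf).union ((hD.subset (Set.sep_subset _ _)).image _))
  obtain ⟨N, hN⟩ := gseq_stab (D0 := D0) (S0 := S0) hgfin
  set T : Set (Lit V) := gseq D0 S0 N with hT
  have hS0T : S0 ⊆ T := gseq_mono D0 S0 (Nat.zero_le N)
  have hTRl : T ∩ Rl = U := by
    rw [hT, gseq_inter (fun d hd => hd.2), hS0Rl]
  have hTcons : LitConsistent T := gseq_consistent hS0cons N
  have hTclosed0 := gstep_fixed_closed hN
  -- the stages of T are contained in T
  have hstagesub : ∀ i, litStage D W T i ⊆ T := by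
    intro i
    induction i with
    | zero => exact (Set.subset_union_right (s := U)).trans hS0T
    | succ i ih =>
      rintro m (hm | ⟨d, hd, hconcl, hpre, hneg⟩)
      · exact ih hm
      · subst hconcl
        by_cases hdR : d.concl.letter ∈ R
        · -- d ∈ DR : use closedness of U
          have hpreU : ∀ p ∈ d.pre, p ∈ U := by
            intro p hp
            have hpR : p.letter ∈ R := hR p.letter d.concl.letter ⟨d, hd, ⟨p, hp, rfl⟩, rfl⟩ hdR
            have : p ∈ T ∩ Rl := ⟨ih (hpre p hp), hpR⟩
            rw [hTRl] at this
            exact this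
          have hnegU : d.concl.negate ∉ U := by
            intro hcon
            apply hneg
            have : d.concl.negate ∈ T ∩ Rl := by rw [hTRl]; exact hcon
            exact this.1
          have : d.concl ∈ U := core_closed hU ⟨hd, hdR⟩ hpreU hnegU
          exact hS0T (Or.inl this)
        · exact hTclosed0 d ⟨hd, hdR⟩ (fun p hp => ih (hpre p hp)) hneg
  -- T is contained in the union of its stages
  have hgrounded : ∀ n, gseq D0 S0 n ⊆ ⋃ i, litStage D W T i := by
    have hUsub : ∀ i, litStage DR (W ∩ Rl) U i ⊆ litStage D W T i := by
      intro i
      induction i with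
      | zero => exact Set.inter_subset_left
      | succ i ih =>
        rintro m (hm | ⟨d, hd, hconcl, hpre, hneg⟩)
        · exact Or.inl (ih hm)
        · refine Or.inr ⟨d, hd.1, hconcl, fun p hp => ih (hpre p hp), ?_⟩
          intro hcon
          apply hneg
          have hmR : m.negate ∈ Rl := by
            show m.negate.letter ∈ R
            rw [negate_letter, ← hconcl]
            exact hd.2
          have : m.negate ∈ T ∩ Rl := ⟨hcon, hmR⟩
          rw [hTRl] at this
          exact this
    intro n
    induction n with
    | zero =>
      rintro m (hmU | hmW)
      · rw [hU] at hmU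
        rcases Set.mem_iUnion.mp hmU with ⟨i, hi⟩
        exact Set.mem_iUnion.mpr ⟨i, hUsub i hi⟩
      · exact Set.mem_iUnion.mpr ⟨0, hmW⟩
    | succ n ih =>
      show gstep D0 (gseq D0 S0 n) ⊆ _
      unfold gstep
      split
      · next h =>
        obtain ⟨hd, hpre, hneg, hnew⟩ := h.choose_spec
        intro m hm
        rcases Set.mem_insert_iff.mp hm with rfl | hm
        · -- the newly added conclusion
          have hpstage : ∃ i, ∀ p ∈ h.choose.pre, p ∈ litStage D W T i := by
            cases hp : h.choose.pre with
            | none => exact ⟨0, by simp [hp]⟩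
            | some p =>
              have hpT : p ∈ gseq D0 S0 n := hpre p (by rw [hp]; rfl)
              rcases Set.mem_iUnion.mp (ih hpT) with ⟨i, hi⟩
              refine ⟨i, fun q hq => ?_⟩
              rw [Option.mem_def, Option.some_inj] at hq
              rw [← hq]
              exact hi
          rcases hpstage with ⟨i, hi⟩
          have hnegT : h.choose.concl.negate ∉ T := by
            have hmem1 : h.choose.concl ∈ gseq D0 S0 (n+1) := by
              show _ ∈ gstep D0 (gseq D0 S0 n)
              rw [gstep, dif_pos h]
              exact Set.mem_insert _ _
            have hcT : h.choose.concl ∈ T := gseq_le_stab hN (n+1) hmem1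
            exact fun hcon => hTcons _ hcT hcon
          exact Set.mem_iUnion.mpr ⟨i + 1, Or.inr ⟨h.choose, hd.1, rfl, hi, hnegT⟩⟩
        · exact ih hm
      · exact ih
  refine ⟨T, ?_, hTRl⟩
  show T = ⋃ i, litStage D W T i
  apply Set.Subset.antisymm
  · exact hgrounded N
  · exact Set.iUnion_subset hstagesub
/-- Entailment of a literal whose letter is in a downward-closed set `R` only depends
on the `R`-part of the facts. -/
lemma entails_transfer (hD : D.Finite)
    {R : Set V} (hR : ∀ x y, depEdge D x y → y ∈ R → x ∈ R)
    {Wa Wb : Set (Lit V)} (hWaf : Wa.Finite) (hWbf : Wb.Finite)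
    (hWa : LitConsistent Wa) (hWb : LitConsistent Wb)
    (hab : Wa ∩ {m : Lit V | m.letter ∈ R} = Wb ∩ {m | m.letter ∈ R})
    {l : Lit V} (hl : l.letter ∈ R) :
    NMU.entails D Wa l → NMU.entails D Wb l := by
  intro h
  rw [entails_iff_core hD hWbf hWb]
  intro T hT
  have hU := core_restrict (W := Wb) hR hT
  rw [← hab] at hU
  obtain ⟨T', hT', hT'R⟩ := core_complete hD hWaf hWa hR hU
  have hlT' : l ∈ T' := (entails_iff_core hD hWaf hWa l).mp h T' hT'
  have hmem : l ∈ T' ∩ {m : Lit V | m.letter ∈ R} := ⟨hlT', hl⟩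
  rw [hT'R] at hmem
  exact hmem.1

/-- A finite nonempty set preordered by `r` has a minimal element. -/
lemma exists_r_minimal {α : Type} (r : α → α → Prop) (hrefl : ∀ a, r a a)
    (htrans : ∀ a b c, r a b → r b c → r a c) :
    ∀ n (S : Set α), S.Finite → S.Nonempty → S.ncard ≤ n →
      ∃ s ∈ S, ∀ t ∈ S, r t s → r s t := by
  intro n
  induction n with
  | zero =>
    intro S hfin hne hcard
    rcases hne with ⟨s, hs⟩
    have : S.ncard = 0 := Nat.le_zero.mp hcard
    rw [Set.ncard_eq_zero hfin] at this
    rw [this] at hs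
    exact absurd hs (Set.notMem_empty s)
  | succ n ih =>
    intro S hfin hne hcard
    rcases hne with ⟨s, hs⟩
    by_cases hmax : ∀ t ∈ S, r t s → r s t
    · exact ⟨s, hs, hmax⟩
    · push_neg at hmax
      rcases hmax with ⟨t, htS, hts, hnst⟩
      set S₁ : Set α := {u ∈ S | r u s ∧ ¬ r s u} with hS₁
      have hS₁sub : S₁ ⊆ S := Set.sep_subset _ _
      have hsS₁ : s ∉ S₁ := fun hcon => hcon.2.2 (hrefl s)
      have hS₁ssub : S₁ ⊂ S := ⟨hS₁sub, fun hcon => hsS₁ (hcon hs)⟩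
      have hS₁fin : S₁.Finite := hfin.subset hS₁sub
      have hcard₁ : S₁.ncard ≤ n := by
        have := Set.ncard_lt_ncard hS₁ssub hfin
        omega
      obtain ⟨s₁, hs₁S₁, hs₁min⟩ := ih S₁ hS₁fin ⟨t, htS, hts, hnst⟩ hcard₁
      refine ⟨s₁, hS₁sub hs₁S₁, ?_⟩
      intro u huS hus₁
      have huS₁ : u ∈ S₁ := by
        refine ⟨huS, htrans u s₁ s hus₁ hs₁S₁.2.1, ?_⟩
        intro hsu
        exact hs₁S₁.2.2 (htrans s u s₁ hsu hus₁)
      exact hs₁min u huS₁ hus₁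

end OutlierSCC

/-- If `S` is a minimal strong outlier witness set for `L` in the consistent NMU theory
`(D, W)`, then the letters of `S` all lie in one strongly connected component of the
atomic dependency graph, i.e. they are pairwise mutually reachable. -/
theorem minimal_strong_witness_in_scc {V : Type} (D : Set (NMUDefault V)) (W : Set (Lit V))
    (L S : Set (Lit V)) (hD : D.Finite) (hW : W.Finite)
    (hcons : LitConsistent W) (hL : L ⊆ W)
    (hwit : NMUStrongWitness D W L S)
    (hmin : ∀ S' ⊆ S, S' ≠ S → ¬ NMUStrongWitness D W L S') :
    ∀ a ∈ S, ∀ b ∈ S, depReach D a.letter b.letter ∧ depReach D b.letter a.letter := by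
  classical
  obtain ⟨hSne, hSsub, hent, hnent⟩ := hwit
  have hSW : S ⊆ W := hSsub.trans Set.diff_subset
  have hSfin : S.Finite := hW.subset hSW
  -- pick a minimal element of S with respect to reachability
  obtain ⟨z, hzS, hzmin⟩ :=
    OutlierSCC.exists_r_minimal (fun a b : Lit V => depReach D a.letter b.letter)
      (fun a => Relation.ReflTransGen.refl)
      (fun a b c hab hbc => hab.trans hbc)
      S.ncard S hSfin hSne le_rfl
  set S' : Set (Lit V) := {t ∈ S | depReach D t.letter z.letter} with hS'
  have hS'sub : S' ⊆ S := Set.sep_subset _ _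
  set R : Set V := {x | depReach D x z.letter} with hRdef
  have hR : ∀ x y, depEdge D x y → y ∈ R → x ∈ R :=
    fun x y hxy hyR => Relation.ReflTransGen.head hxy hyR
  have hinterS : ∀ (X : Set (Lit V)), (W \ X ∪ S \ S') ∩ {m : Lit V | m.letter ∈ R}
      = (W \ X) ∩ {m | m.letter ∈ R} := by
    intro X
    apply Set.Subset.antisymm
    · rintro m ⟨hm | hm, hmR⟩
      · exact ⟨hm, hmR⟩
      · exact absurd ⟨hm.1, hmR⟩ hm.2
    · rintro m ⟨hm, hmR⟩
      exact ⟨Or.inl hm, hmR⟩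
  -- two set identities
  have hWS' : W \ S' = W \ S ∪ S \ S' := by
    ext x
    constructor
    · rintro ⟨hxW, hxS'⟩
      by_cases hxS : x ∈ S
      · exact Or.inr ⟨hxS, hxS'⟩
      · exact Or.inl ⟨hxW, hxS⟩
    · rintro (⟨hxW, hxS⟩ | ⟨hxS, hxS'⟩)
      · exact ⟨hxW, fun hc => hxS (hS'sub hc)⟩
      · exact ⟨hSW hxS, hxS'⟩
  have hWS'L : W \ (S' ∪ L) = W \ (S ∪ L) ∪ S \ S' := by
    ext x
    constructor
    · rintro ⟨hxW, hxS'L⟩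
      by_cases hxS : x ∈ S
      · exact Or.inr ⟨hxS, fun hc => hxS'L (Or.inl hc)⟩
      · exact Or.inl ⟨hxW, fun hc => hc.elim hxS (fun hl => hxS'L (Or.inr hl))⟩
    · rintro (⟨hxW, hxSL⟩ | ⟨hxS, hxS'⟩)
      · exact ⟨hxW, fun hc => hxSL (hc.elim (fun h => Or.inl (hS'sub h)) Or.inr)⟩
      · refine ⟨hSW hxS, fun hc => ?_⟩
        rcases hc with hc | hc
        · exact hxS' hc
        · exact (hSsub hxS).2 hc
  have hfinWX : ∀ (X : Set (Lit V)), (W \ X).Finite := fun X => hW.subset Set.diff_subset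
  have hconsWX : ∀ (X : Set (Lit V)), LitConsistent (W \ X) :=
    fun X => OutlierSCC.litConsistent_mono hcons Set.diff_subset
  have hconsU : ∀ (X : Set (Lit V)), LitConsistent (W \ X ∪ S \ S') := by
    intro X
    apply OutlierSCC.litConsistent_mono hcons
    rintro x (hx | hx)
    · exact hx.1
    · exact hSW hx.1
  have hfinU : ∀ (X : Set (Lit V)), (W \ X ∪ S \ S').Finite :=
    fun X => (hfinWX X).union (hSfin.subset Set.diff_subset)
  -- S' is a strong outlier witness set
  have hS'wit : NMUStrongWitness D W L S' := by
    refine ⟨⟨z, hzS, Relation.ReflTransGen.refl⟩, hS'sub.trans hSsub, ?_, ?_⟩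
    · intro l hl
      have h1 : NMU.entails D (W \ S) l.negate := hent l (hS'sub hl)
      have h2 : NMU.entails D (W \ S ∪ S \ S') l.negate := by
        refine OutlierSCC.entails_transfer hD hR (hfinWX S) (hfinU S) (hconsWX S)
          (hconsU S) ((hinterS S).symm) ?_ h1
        show l.negate.letter ∈ R
        rw [OutlierSCC.negate_letter]
        exact hl.2
      rwa [hWS']
    · intro l hl hcon
      apply hnent l (hS'sub hl)
      rw [hWS'L] at hcon
      refine OutlierSCC.entails_transfer hD hR (hfinU (S ∪ L)) (hfinWX (S ∪ L))
        (hconsU (S ∪ L)) (hconsWX (S ∪ L)) (hinterS (S ∪ L)) ?_ hcon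
      show l.negate.letter ∈ R
      rw [OutlierSCC.negate_letter]
      exact hl.2
  -- minimality forces S' = S
  have hS'eq : S' = S := by
    by_contra hne
    exact hmin S' hS'sub hne hS'wit
  -- conclude
  intro a ha b hb
  have haS' : a ∈ S' := hS'eq.symm ▸ ha
  have hbS' : b ∈ S' := hS'eq.symm ▸ hb
  have hza : depReach D z.letter a.letter := hzmin a ha haS'.2
  have hzb : depReach D z.letter b.letter := hzmin b hb hbS'.2
  exact ⟨haS'.2.trans hzb, hbS'.2.trans hza⟩
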